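/- For every monomial x₁^{a₁}⋯x_d^{a_d} of total degree K + 1 in ℝ^d, if every homogeneous polynomial of degree K + 1 decomposes as h(x) + |x|²·f(x) with h harmonic homogeneous of degree K + 1 and f a polynomial of degree ≤ K − 1, then x₁^{a₁}⋯x_d^{a_d} lies in the span of products V(x)·p(2|x|² − 1) where V is a harmonic homogeneous polynomial of degree ≤ 2(K+1) and p is a univariate polynomial of degree ≤ K + 1. -/

import Mathlib

open MvPolynomial

/-- A multivariate polynomial is harmonic if its Laplacian vanishes. -/
def IsHarmonic {d : ℕ} (P : MvPolynomial (Fin d) ℝ) : Prop :=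
  (∑ i : Fin d, pderiv i (pderiv i P)) = 0

noncomputable section AuxHarmonic

namespace AuxHarmonic

variable {d : ℕ}

def lap (P : MvPolynomial (Fin d) ℝ) : MvPolynomial (Fin d) ℝ :=
  ∑ i : Fin d, pderiv i (pderiv i P)

lemma isHarmonic_iff (P : MvPolynomial (Fin d) ℝ) : IsHarmonic P ↔ lap P = 0 := Iff.rfl

def rad (d : ℕ) : MvPolynomial (Fin d) ℝ := ∑ i : Fin d, X i ^ 2

lemma lap_add (P Q : MvPolynomial (Fin d) ℝ) : lap (P + Q) = lap P + lap Q := by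
  simp [lap, Finset.sum_add_distrib]

lemma lap_sub (P Q : MvPolynomial (Fin d) ℝ) : lap (P - Q) = lap P - lap Q := by
  simp [lap, Finset.sum_sub_distrib]

lemma lap_smul (c : ℝ) (P : MvPolynomial (Fin d) ℝ) : lap (c • P) = c • lap P := by
  simp [lap, Finset.smul_sum]

def lapL (d : ℕ) : MvPolynomial (Fin d) ℝ →ₗ[ℝ] MvPolynomial (Fin d) ℝ where
  toFun := lap
  map_add' := lap_add
  map_smul' := lap_smul

lemma degree_fin (s : Fin d →₀ ℕ) : Finsupp.degree s = ∑ i : Fin d, s i :=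
  Finset.sum_subset (Finset.subset_univ _)
    (fun x _ hx => by simpa using Finsupp.notMem_support_iff.mp hx)

lemma degree_sub_single {s : Fin d →₀ ℕ} {i : Fin d} (h : s i ≠ 0) :
    Finsupp.degree (s - Finsupp.single i 1) = Finsupp.degree s - 1 := by
  rw [degree_fin, degree_fin]
  simp only [Finsupp.tsub_apply]
  rw [← Finset.add_sum_erase _ _ (Finset.mem_univ i),
      ← Finset.add_sum_erase _ (fun j => s j) (Finset.mem_univ i)]
  rw [Finset.sum_congr rfl (fun j hj => by
    rw [Finsupp.single_apply, if_neg (Ne.symm (Finset.ne_of_mem_erase hj)), Nat.sub_zero])]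
  rw [Finsupp.single_eq_same]
  have hle : 1 ≤ s i := Nat.one_le_iff_ne_zero.mpr h
  have hee : (Finset.univ.erase i).sum ⇑s = ∑ x ∈ Finset.univ.erase i, s x := rfl
  rw [hee]
  omega

lemma pderiv_isHomogeneous {n : ℕ} {P : MvPolynomial (Fin d) ℝ}
    (hP : P.IsHomogeneous n) (i : Fin d) : (pderiv i P).IsHomogeneous (n - 1) := by
  conv_lhs => rw [P.as_sum]
  rw [map_sum]
  refine IsHomogeneous.sum _ _ _ fun s hs => ?_
  rw [pderiv_monomial]
  by_cases h : s i = 0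
  · simp only [h, Nat.cast_zero, mul_zero, map_zero]
    exact isHomogeneous_zero _ _ _
  · refine isHomogeneous_monomial _ ?_
    rw [degree_sub_single h]
    have := hP (mem_support_iff.mp hs)
    rw [Pi.one_def, ← Finsupp.degree_eq_weight_one] at this
    rw [this]

lemma lap_isHomogeneous {n : ℕ} {P : MvPolynomial (Fin d) ℝ}
    (hP : P.IsHomogeneous (n + 2)) : (lap P).IsHomogeneous n := by
  refine IsHomogeneous.sum _ _ _ fun i _ => ?_
  have h1 := pderiv_isHomogeneous hP i
  have h2 := pderiv_isHomogeneous h1 i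
  simpa using h2

lemma euler_monomial (s : Fin d →₀ ℕ) (c : ℝ) :
    ∑ i : Fin d, X i * pderiv i (monomial s c) = (Finsupp.degree s) • monomial s c := by
  have key : ∀ i : Fin d, X i * pderiv i (monomial s c) = monomial s (c * s i) := by
    intro i
    rw [pderiv_monomial]
    by_cases h : s i = 0
    · simp [h]
    · have hs : Finsupp.single i 1 + (s - Finsupp.single i 1) = s := by
        ext j
        by_cases hj : j = i
        · subst hj
          simp [Nat.add_sub_cancel' (Nat.one_le_iff_ne_zero.mpr h)]
        · simp [Finsupp.single_apply, Ne.symm hj]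
      rw [X, monomial_mul, hs, one_mul]
  simp only [key]
  rw [← map_sum (monomial s), smul_monomial]
  congr 1
  rw [Finsupp.degree_apply, nsmul_eq_mul, mul_comm, ← Finset.mul_sum]
  congr 1
  push_cast
  exact (Finset.sum_subset (Finset.subset_univ _)
    (fun x _ hx => by simp [Finsupp.notMem_support_iff.mp hx])).symm

lemma euler {n : ℕ} {P : MvPolynomial (Fin d) ℝ} (hP : P.IsHomogeneous n) :
    ∑ i : Fin d, X i * pderiv i P = n • P := by
  conv_lhs => rw [P.as_sum]
  conv_rhs => rw [P.as_sum]
  simp only [map_sum, Finset.mul_sum, Finset.smul_sum]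
  rw [Finset.sum_comm]
  refine Finset.sum_congr rfl fun s hs => ?_
  rw [euler_monomial]
  congr 1
  have := hP (mem_support_iff.mp hs)
  rwa [Pi.one_def, ← Finsupp.degree_eq_weight_one] at this

lemma lap_mul (P Q : MvPolynomial (Fin d) ℝ) :
    lap (P * Q) = lap P * Q +
      ((∑ i : Fin d, pderiv i P * pderiv i Q) + ∑ i : Fin d, pderiv i P * pderiv i Q) +
      P * lap Q := by
  simp only [lap, pderiv_mul, map_add, Finset.sum_add_distrib, Finset.sum_mul, Finset.mul_sum]
  abel

lemma pderiv_rad (i : Fin d) : pderiv i (rad d) = 2 * X i := by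
  rw [rad, map_sum]
  rw [Finset.sum_eq_single i]
  · simp [pderiv_pow]
  · intro j _ hj
    simp [pderiv_pow, pderiv_X_of_ne hj]
  · intro hi; exact absurd (Finset.mem_univ i) hi

lemma lap_rad : lap (rad d) = C ((2 * d : ℕ) : ℝ) := by
  simp only [lap, pderiv_rad]
  have key : ∀ i : Fin d, pderiv i ((2 : MvPolynomial (Fin d) ℝ) * X i) = 2 := by
    intro i
    rw [pderiv_mul]
    have h2 : (2 : MvPolynomial (Fin d) ℝ) = C 2 := by
      rw [map_ofNat]
    simp [h2, pderiv_C]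
  simp only [key, Finset.sum_const, Finset.card_univ, Fintype.card_fin, nsmul_eq_mul]
  rw [← map_natCast (C : ℝ →+* MvPolynomial (Fin d) ℝ)]
  push_cast
  rw [map_mul, map_ofNat]
  ring

lemma rad_isHomogeneous : (rad d).IsHomogeneous 2 :=
  IsHomogeneous.sum _ _ _ fun i _ => isHomogeneous_X_pow _ _

lemma lap_rad_mul {n : ℕ} {q : MvPolynomial (Fin d) ℝ} (hq : q.IsHomogeneous n) :
    lap (rad d * q) = C ((2 * d + 4 * n : ℕ) : ℝ) * q + rad d * lap q := by
  rw [lap_mul, lap_rad]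
  have h2 : ∑ i : Fin d, pderiv i (rad d) * pderiv i q
      = C ((2 * n : ℕ) : ℝ) * q := by
    simp only [pderiv_rad, mul_assoc]
    rw [← Finset.mul_sum, euler hq, nsmul_eq_mul]
    simp only [map_natCast]
    push_cast
    ring
  rw [h2]
  simp only [map_natCast]
  push_cast
  ring

lemma lap_rad_pow (j : ℕ) {s : ℕ} {h : MvPolynomial (Fin d) ℝ}
    (hharm : lap h = 0) (hs : h.IsHomogeneous s) :
    lap (rad d ^ (j + 1) * h)
      = C ((2 * (j + 1) * (d + 2 * j + 2 * s) : ℕ) : ℝ) * (rad d ^ j * h) := by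
  induction j with
  | zero =>
    rw [pow_one, lap_rad_mul hs, hharm, mul_zero, add_zero, pow_zero, one_mul]
    congr 2
    push_cast
    ring
  | succ j ih =>
    have hq : (rad d ^ (j + 1) * h).IsHomogeneous (2 * (j + 1) + s) :=
      (rad_isHomogeneous.pow (j + 1)).mul hs
    have : rad d ^ (j + 1 + 1) * h = rad d * (rad d ^ (j + 1) * h) := by ring
    rw [this, lap_rad_mul hq, ih]
    simp only [map_natCast]
    push_cast
    ring

lemma eq_C_of_isHomogeneous_zero {P : MvPolynomial (Fin d) ℝ} (hP : P.IsHomogeneous 0) :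
    P = C (coeff 0 P) := by
  have h1 := homogeneousComponent_of_mem (m := 0) (n := 0)
    ((mem_homogeneousSubmodule 0 P).mpr hP)
  rw [if_pos rfl] at h1
  rw [← homogeneousComponent_zero, h1]

lemma harmonic_of_le_one {m : ℕ} (hm : m ≤ 1) {P : MvPolynomial (Fin d) ℝ}
    (hP : P.IsHomogeneous m) : lap P = 0 := by
  rw [lap]
  refine Finset.sum_eq_zero fun i _ => ?_
  have h1 : (pderiv i P).IsHomogeneous 0 := by
    have := pderiv_isHomogeneous hP i
    interval_cases m
    · simpa using this
    · simpa using this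
  rw [eq_C_of_isHomogeneous_zero h1, pderiv_C]

def Tset (d m : ℕ) : Set (MvPolynomial (Fin d) ℝ) :=
  {q | ∃ (j s : ℕ) (h : MvPolynomial (Fin d) ℝ),
    lap h = 0 ∧ h.IsHomogeneous s ∧ 2 * j + s = m ∧ q = rad d ^ j * h}

lemma Tset_subset_homog (m : ℕ) :
    Tset d m ⊆ (homogeneousSubmodule (Fin d) ℝ m : Set (MvPolynomial (Fin d) ℝ)) := by
  rintro q ⟨j, s, h, _, hhs, hjs, rfl⟩
  rw [SetLike.mem_coe, mem_homogeneousSubmodule, ← hjs]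
  exact (rad_isHomogeneous.pow j).mul hhs

lemma decomp (hd : 0 < d) : ∀ m : ℕ, ∀ P : MvPolynomial (Fin d) ℝ, P.IsHomogeneous m →
    P ∈ Submodule.span ℝ (Tset d m) := by
  intro m
  induction m using Nat.strong_induction_on with
  | _ m IH =>
  intro P hP
  rcases le_or_gt m 1 with hm | hm
  · exact Submodule.subset_span ⟨0, m, P, harmonic_of_le_one hm hP, hP, by simp, by simp⟩
  · obtain ⟨m', rfl⟩ : ∃ m', m = m' + 2 := ⟨m - 2, by omega⟩
    have hlap : (lap P).IsHomogeneous m' := lap_isHomogeneous hP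
    have hspan := IH m' (by omega) (lap P) hlap
    set Θ : MvPolynomial (Fin d) ℝ →ₗ[ℝ] MvPolynomial (Fin d) ℝ :=
      (lapL d).comp (LinearMap.mulLeft ℝ (rad d)) with hΘ
    have hsub : Submodule.span ℝ (Tset d m')
        ≤ Submodule.map Θ (Submodule.span ℝ (Tset d m')) := by
      rw [Submodule.span_le]
      rintro q ⟨j, s, h, hh, hhs, hjs, rfl⟩
      set c : ℝ := ((2 * (j + 1) * (d + 2 * j + 2 * s) : ℕ) : ℝ) with hc
      have hcpos : (0 : ℕ) < 2 * (j + 1) * (d + 2 * j + 2 * s) := by positivity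
      have hcne : c ≠ 0 := by
        rw [hc]
        exact_mod_cast hcpos.ne'
      refine ⟨c⁻¹ • (rad d ^ j * h),
        Submodule.smul_mem _ _ (Submodule.subset_span ⟨j, s, h, hh, hhs, hjs, rfl⟩), ?_⟩
      show lap (rad d * (c⁻¹ • (rad d ^ j * h))) = rad d ^ j * h
      rw [mul_smul_comm, lap_smul]
      have : rad d * (rad d ^ j * h) = rad d ^ (j + 1) * h := by ring
      rw [this, lap_rad_pow j hh hhs, ← hc]
      rw [smul_eq_C_mul, ← mul_assoc, ← map_mul, inv_mul_cancel₀ hcne, map_one, one_mul]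
    obtain ⟨F, hF, hΘF⟩ := hsub hspan
    have hΘF' : lap (rad d * F) = lap P := hΘF
    have hFhom : F.IsHomogeneous m' := by
      have := Submodule.span_le.mpr (Tset_subset_homog (d := d) m') hF
      rwa [mem_homogeneousSubmodule] at this
    have hharm : lap (P - rad d * F) = 0 := by
      rw [lap_sub, hΘF', sub_self]
    have hhom2 : (P - rad d * F).IsHomogeneous (m' + 2) := by
      have hmul := rad_isHomogeneous.mul hFhom
      rw [add_comm] at hmul
      exact hP.sub hmul
    have hPsplit : P = (P - rad d * F) + rad d * F := by ring
    rw [hPsplit]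
    refine Submodule.add_mem _
      (Submodule.subset_span ⟨0, m' + 2, _, hharm, hhom2, by simp, by simp⟩) ?_
    have hmap : Submodule.span ℝ (Tset d m')
        ≤ (Submodule.span ℝ (Tset d (m' + 2))).comap (LinearMap.mulLeft ℝ (rad d)) := by
      rw [Submodule.span_le]
      rintro q ⟨j, s, h, hh, hhs, hjs, rfl⟩
      refine Submodule.subset_span ⟨j + 1, s, h, hh, hhs, by omega, ?_⟩
      show rad d * (rad d ^ j * h) = rad d ^ (j + 1) * h
      ring
    exact hmap hF

end AuxHarmonic

end AuxHarmonic

/-- Inductive step of Lemma `l1`: if every homogeneous polynomial of degree `K+1`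
decomposes as `h(x) + |x|² f(x)` with `h` harmonic homogeneous of degree `K+1` and
`f` of degree `≤ K-1`, then any monomial `x₁^{a₁}⋯x_d^{a_d}` of total degree `K+1`
lies in the span of products `V(x) · p(2|x|²-1)` with `V` harmonic homogeneous of
degree `≤ 2(K+1)` and `p` univariate of degree `≤ K+1`. -/
theorem monomial_mem_span_harmonic_jacobi (d K : ℕ)
    (a : Fin d →₀ ℕ) (ha : (a.sum fun _ e => e) = K + 1)
    (hdecomp : ∀ P : MvPolynomial (Fin d) ℝ, P.IsHomogeneous (K + 1) →
      ∃ (h f : MvPolynomial (Fin d) ℝ), IsHarmonic h ∧ h.IsHomogeneous (K + 1) ∧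
        f.totalDegree ≤ K - 1 ∧ P = h + (∑ i : Fin d, X i ^ 2) * f) :
    (monomial a (1 : ℝ)) ∈ Submodule.span ℝ
      {q : MvPolynomial (Fin d) ℝ | ∃ (l : ℕ) (V : MvPolynomial (Fin d) ℝ)
        (p : Polynomial ℝ), l ≤ 2 * (K + 1) ∧ IsHarmonic V ∧ V.IsHomogeneous l ∧
        p.natDegree ≤ K + 1 ∧
        q = V * Polynomial.aeval (2 * (∑ i : Fin d, X i ^ 2) - 1) p} := by
  classical
  rcases Nat.eq_zero_or_pos d with hd | hd
  · exfalso
    subst hd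
    have haz : a = 0 := Subsingleton.elim a 0
    rw [haz, Finsupp.sum_zero_index] at ha
    exact Nat.succ_ne_zero K ha.symm
  · have hhom : (monomial a (1 : ℝ)).IsHomogeneous (K + 1) := by
      refine isHomogeneous_monomial _ ?_
      rw [Finsupp.degree, ← ha]
      rfl
    have hmem := AuxHarmonic.decomp hd (K + 1) _ hhom
    refine Submodule.span_le.mpr ?_ hmem
    rintro q ⟨j, s, h, hh, hhs, hjs, rfl⟩
    refine Submodule.subset_span
      ⟨s, h, ((2⁻¹ : ℝ) • (Polynomial.X + 1)) ^ j, by omega, hh, hhs, ?_, ?_⟩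
    · refine le_trans (Polynomial.natDegree_pow_le) ?_
      have h1 : (((2⁻¹ : ℝ) • (Polynomial.X + 1) : Polynomial ℝ)).natDegree ≤ 1 := by
        refine le_trans (Polynomial.natDegree_smul_le _ _) ?_
        rw [show (Polynomial.X + 1 : Polynomial ℝ) = Polynomial.X + Polynomial.C 1 by
          rw [map_one], Polynomial.natDegree_X_add_C]
      calc j * (((2⁻¹ : ℝ) • (Polynomial.X + 1) : Polynomial ℝ)).natDegree ≤ j * 1 :=
            Nat.mul_le_mul_left _ h1
        _ ≤ K + 1 := by omega
    · have hradeq : (∑ i : Fin d, X i ^ 2) = AuxHarmonic.rad d := rfl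
      rw [hradeq, map_pow, map_smul, map_add, Polynomial.aeval_X, map_one]
      have ht : 2 * AuxHarmonic.rad d - 1 + 1 = 2 * AuxHarmonic.rad d := by ring
      rw [ht]
      have h2 : (2⁻¹ : ℝ) • ((2 : MvPolynomial (Fin d) ℝ) * AuxHarmonic.rad d)
          = AuxHarmonic.rad d := by
        rw [smul_eq_C_mul, ← mul_assoc, show (2 : MvPolynomial (Fin d) ℝ) = C 2 by
          rw [map_ofNat], ← map_mul]
        norm_num
      rw [h2, mul_comm]
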